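/- Let γ > 0 and 0 < a < b < 1. Define S(u,v) = ∫_u^v e^{-1/z}·z/(1−z) dz and R(u,v) = (1/γ)·( log(v/(1−v)) − 2v − log(u/(1−u)) + 2u ), and set T(y) = ( S(y,b)·R(a,y) − S(a,y)·R(y,b) ) / S(a,b) for y ∈ [a,b]. Then T(a) = T(b) = 0, and for every y ∈ (a,b), T is twice differentiable at y with −γ y·T'(y) + γ y³(1−y)·T''(y) = −1. -/

import Mathlib

/-- Heterodyne scale density Q(z) = e^{-1/z}·z/(1−z). -/
noncomputable def Qhet (z : ℝ) : ℝ := Real.exp (-1 / z) * z / (1 - z)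

/-- Heterodyne scale integral S(u,v) = ∫_u^v Q(z) dz. -/
noncomputable def Shet (u v : ℝ) : ℝ := ∫ z in u..v, Qhet z

/-- Heterodyne R(u,v) = (1/γ)[log(z/(1−z)) − 2z]_u^v. -/
noncomputable def Rhet (γ u v : ℝ) : ℝ :=
  (1 / γ) * (Real.log (v / (1 - v)) - 2 * v - Real.log (u / (1 - u)) + 2 * u)

lemma Qhet_measurable : Measurable Qhet := by unfold Qhet; fun_prop

lemma Qhet_contAt {y : ℝ} (h0 : y ≠ 0) (h1 : (1:ℝ) - y ≠ 0) : ContinuousAt Qhet y := by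
  unfold Qhet
  have h : ContinuousAt (fun z : ℝ => -1 / z) y :=
    ContinuousAt.div continuousAt_const continuousAt_id h0
  exact (h.rexp.mul continuousAt_id).div (continuousAt_const.sub continuousAt_id) h1

lemma hasDerivAt_log_ratio {y : ℝ} (h0 : y ≠ 0) (h1 : (1:ℝ) - y ≠ 0) :
    HasDerivAt (fun t : ℝ => Real.log (t / (1 - t))) (1 / (y * (1 - y))) y := by
  have hdiv : HasDerivAt (fun t : ℝ => t / (1 - t))
      ((1 * (1 - y) - y * (0 - 1)) / (1 - y) ^ 2) y :=
    (hasDerivAt_id y).div ((hasDerivAt_const y 1).sub (hasDerivAt_id y)) h1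
  have := hdiv.log (div_ne_zero h0 h1)
  convert this using 1
  field_simp
  ring

lemma hasDerivAt_Rhet_right (γ a : ℝ) {y : ℝ} (h0 : y ≠ 0) (h1 : (1:ℝ) - y ≠ 0) :
    HasDerivAt (fun t => Rhet γ a t) ((1/γ) * (1/(y*(1-y)) - 2)) y := by
  have h2 : HasDerivAt (fun t : ℝ => 2 * t) 2 y := by
    simpa using (hasDerivAt_id y).const_mul 2
  have := ((((hasDerivAt_log_ratio h0 h1).sub h2).sub_const
      (Real.log (a / (1 - a)))).add_const (2 * a)).const_mul (1/γ)
  exact this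

lemma hasDerivAt_Rhet_left (γ b : ℝ) {y : ℝ} (h0 : y ≠ 0) (h1 : (1:ℝ) - y ≠ 0) :
    HasDerivAt (fun t => Rhet γ t b) (-((1/γ) * (1/(y*(1-y)) - 2))) y := by
  have h2 : HasDerivAt (fun t : ℝ => 2 * t) 2 y := by
    simpa using (hasDerivAt_id y).const_mul 2
  have := (((hasDerivAt_log_ratio h0 h1).const_sub
      (Real.log (b / (1 - b)) - 2 * b)).add h2).const_mul (1/γ)
  exact this.congr_deriv (by ring)

lemma hasDerivAt_Khet (γ : ℝ) {y : ℝ} (h0 : y ≠ 0) (h1 : (1:ℝ) - y ≠ 0) :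
    HasDerivAt (fun t : ℝ => (1/γ) * (1/(t*(1-t)) - 2))
      ((1/γ) * (-(1 - 2*y) / (y*(1-y))^2)) y := by
  have hmul : HasDerivAt (fun t : ℝ => t * (1 - t)) (1 * (1 - y) + y * (0 - 1)) y :=
    (hasDerivAt_id y).mul ((hasDerivAt_const y 1).sub (hasDerivAt_id y))
  have hne : y * (1 - y) ≠ 0 := mul_ne_zero h0 h1
  have hdiv : HasDerivAt (fun t : ℝ => 1 / (t * (1 - t)))
      ((0 * (y * (1 - y)) - 1 * (1 * (1 - y) + y * (0 - 1))) / (y * (1 - y)) ^ 2) y :=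
    (hasDerivAt_const y 1).div hmul hne
  have := (hdiv.sub_const 2).const_mul (1/γ)
  exact this.congr_deriv (by ring)

lemma hasDerivAt_Qhet {y : ℝ} (h0 : y ≠ 0) (h1 : (1:ℝ) - y ≠ 0) :
    HasDerivAt Qhet (Real.exp (-1/y) / (y * (1-y)^2)) y := by
  have hneg : HasDerivAt (fun t : ℝ => -1 / t) ((0 * y - (-1) * 1) / y ^ 2) y :=
    (hasDerivAt_const y (-1)).div (hasDerivAt_id y) h0
  have hexp := hneg.exp
  unfold Qhet
  refine ((hexp.mul (hasDerivAt_id y)).div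
    ((hasDerivAt_const y 1).sub (hasDerivAt_id y)) h1).congr_deriv ?_
  simp only [Pi.mul_apply, Pi.sub_apply, id]
  field_simp
  ring

/-- The mean first exit time of (a,b) under heterodyne detection,
T(y) = (S(y,b)R(a,y) − S(a,y)R(y,b))/S(a,b), vanishes at a and b and solves
−γy T'(y) + γy³(1−y) T''(y) = −1 on (a,b). -/
theorem het_mean_exit_time (γ a b : ℝ) (hγ : 0 < γ) (ha : 0 < a) (hab : a < b)
    (hb : b < 1) :
    let T : ℝ → ℝ := fun y =>
      (Shet y b * Rhet γ a y - Shet a y * Rhet γ y b) / Shet a b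
    T a = 0 ∧ T b = 0 ∧
    ∀ y ∈ Set.Ioo a b, ∃ t' t'' : ℝ,
      HasDerivAt T t' y ∧ HasDerivAt (deriv T) t'' y ∧
      -γ * y * t' + γ * y ^ 3 * (1 - y) * t'' = -1 := by
  have hγ0 : γ ≠ 0 := ne_of_gt hγ
  intro T
  have hint : ∀ u v, u ∈ Set.Icc a b → v ∈ Set.Icc a b →
      IntervalIntegrable Qhet MeasureTheory.volume u v := by
    intro u v hu hv
    apply ContinuousOn.intervalIntegrable
    intro z hz
    have hsub : Set.uIcc u v ⊆ Set.uIcc a b :=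
      Set.uIcc_subset_uIcc (by rwa [Set.uIcc_of_le hab.le]) (by rwa [Set.uIcc_of_le hab.le])
    have hz' : z ∈ Set.Icc a b := by
      have := hsub hz; rwa [Set.uIcc_of_le hab.le] at this
    have h0 : z ≠ 0 := ne_of_gt (lt_of_lt_of_le ha hz'.1)
    have h1 : (1:ℝ) - z ≠ 0 := ne_of_gt (by have := lt_of_le_of_lt hz'.2 hb; linarith)
    exact (Qhet_contAt h0 h1).continuousWithinAt
  have hSpos : 0 < Shet a b := by
    simp only [Shet]
    apply intervalIntegral.intervalIntegral_pos_of_pos_on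
      (hint a b ⟨le_refl a, hab.le⟩ ⟨hab.le, le_refl b⟩)
    · intro x hx
      unfold Qhet
      have h1 : (0:ℝ) < 1 - x := by have := lt_trans hx.2 hb; linarith
      exact div_pos (mul_pos (Real.exp_pos _) (lt_trans ha hx.1)) h1
    · exact hab
  have hc : Shet a b ≠ 0 := ne_of_gt hSpos
  have hRaa : Rhet γ a a = 0 := by simp only [Rhet]; ring
  have hRbb : Rhet γ b b = 0 := by simp only [Rhet]; ring
  have hFG : ∀ t ∈ Set.Ioo a b,
      HasDerivAt (fun u => Shet u b) (-Qhet t) t ∧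
      HasDerivAt (fun u => Shet a u) (Qhet t) t := by
    intro t ht
    have ht0 : t ≠ 0 := ne_of_gt (lt_trans ha ht.1)
    have ht1 : (1:ℝ) - t ≠ 0 := ne_of_gt (by have := lt_trans ht.2 hb; linarith)
    have htm : t ∈ Set.Icc a b := ⟨ht.1.le, ht.2.le⟩
    constructor
    · simp only [Shet]
      exact intervalIntegral.integral_hasDerivAt_left (hint t b htm ⟨hab.le, le_refl b⟩)
        (Qhet_measurable.stronglyMeasurable.stronglyMeasurableAtFilter)
        (Qhet_contAt ht0 ht1)
    · simp only [Shet]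
      exact intervalIntegral.integral_hasDerivAt_right (hint a t ⟨le_refl a, hab.le⟩ htm)
        (Qhet_measurable.stronglyMeasurable.stronglyMeasurableAtFilter)
        (Qhet_contAt ht0 ht1)
  refine ⟨?_, ?_, ?_⟩
  · show (Shet a b * Rhet γ a a - Shet a a * Rhet γ a b) / Shet a b = 0
    simp [Shet, hRaa, intervalIntegral.integral_same]
  · show (Shet b b * Rhet γ a b - Shet a b * Rhet γ b b) / Shet a b = 0
    simp [Shet, hRbb, intervalIntegral.integral_same]
  · have key : ∀ t ∈ Set.Ioo a b, HasDerivAt T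
        ((-Qhet t * Rhet γ a t + Shet t b * ((1/γ) * (1/(t*(1-t)) - 2)) -
          (Qhet t * Rhet γ t b + Shet a t * -((1/γ) * (1/(t*(1-t)) - 2)))) / Shet a b) t := by
      intro t ht
      have ht0 : t ≠ 0 := ne_of_gt (lt_trans ha ht.1)
      have ht1 : (1:ℝ) - t ≠ 0 := ne_of_gt (by have := lt_trans ht.2 hb; linarith)
      obtain ⟨hF, hG⟩ := hFG t ht
      exact ((hF.mul (hasDerivAt_Rhet_right γ a ht0 ht1)).sub
        (hG.mul (hasDerivAt_Rhet_left γ b ht0 ht1))).div_const (Shet a b)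
    intro y hy
    have hy0 : y ≠ 0 := ne_of_gt (lt_trans ha hy.1)
    have hy1 : (1:ℝ) - y ≠ 0 := ne_of_gt (by have := lt_trans hy.2 hb; linarith)
    obtain ⟨hF, hG⟩ := hFG y hy
    have hQd := hasDerivAt_Qhet hy0 hy1
    have hK := hasDerivAt_Khet γ hy0 hy1
    have hg := (((hQd.neg.mul (hasDerivAt_Rhet_right γ a hy0 hy1)).add
        (hF.mul hK)).sub
      ((hQd.mul (hasDerivAt_Rhet_left γ b hy0 hy1)).add
        (hG.mul hK.neg))).div_const (Shet a b)
    have heq : deriv T =ᶠ[nhds y]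
        (fun t => (-Qhet t * Rhet γ a t + Shet t b * ((1/γ) * (1/(t*(1-t)) - 2)) -
          (Qhet t * Rhet γ t b + Shet a t * -((1/γ) * (1/(t*(1-t)) - 2)))) / Shet a b) :=
      Filter.eventuallyEq_of_mem (isOpen_Ioo.mem_nhds hy) (fun t ht => (key t ht).deriv)
    refine ⟨_, _, key y hy, hg.congr_of_eventuallyEq heq, ?_⟩
    have hsum : Shet a y + Shet y b = Shet a b := by
      simp only [Shet]
      exact intervalIntegral.integral_add_adjacent_intervals
        (hint a y ⟨le_refl a, hab.le⟩ ⟨hy.1.le, hy.2.le⟩)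
        (hint y b ⟨hy.1.le, hy.2.le⟩ ⟨hab.le, le_refl b⟩)
    have hFy : Shet y b = Shet a b - Shet a y := by linarith
    rw [hFy]
    simp only [Pi.neg_apply, Qhet, Rhet]
    field_simp
    ring
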